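/- Let K be a field of characteristic zero and n, k positive integers. Let V ⊆ U(gl_n) be the K-linear span of all quantum minors 𝐄_{IJ} of order k+1, over all sequences I, J : Fin (k+1) → Fin n. Then V is invariant under the adjoint action of gl_n: for every A ∈ gl_n and every v ∈ V, the commutator ⁅ι(A), v⁆ = ι(A)·v − v·ι(A) lies in V. -/

import Mathlib

variable (K : Type*) [Field K] (n k : ℕ)

attribute [local instance 100] LieRing.ofAssociativeRing

/-- The quantum minor `𝐄_{IJ}` of order `k+1` in `U(gl_n)`:
`Σ_σ sgn(σ) ∏_{m=0}^{k} (ι(E_{I(m),J(σ(m))}) + m·δ_{I(m),J(σ(m))}·1)`,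
the product ordered with `m` increasing. -/
noncomputable def qMinor (I J : Fin (k + 1) → Fin n) :
    UniversalEnvelopingAlgebra K (Matrix (Fin n) (Fin n) K) :=
  ∑ σ : Equiv.Perm (Fin (k + 1)),
    (Equiv.Perm.sign σ : ℤ) •
      (List.ofFn fun m : Fin (k + 1) =>
        UniversalEnvelopingAlgebra.ι K (Matrix.single (I m) (J (σ m)) (1 : K))
          + (if I m = J (σ m) then (((m : ℕ) : K)) •
              (1 : UniversalEnvelopingAlgebra K (Matrix (Fin n) (Fin n) K)) else 0)).prod

open Function List

section Aux

variable {R : Type*} [Ring R]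

lemma ofFn_update' {N : ℕ} (f : Fin N → R) (m : Fin N) (y : R) :
    List.ofFn (Function.update f m y) = (List.ofFn f).set m y := by
  apply List.ext_getElem
  · simp
  · intro i h1 h2
    simp only [List.length_ofFn, List.length_set] at h2
    simp only [List.getElem_ofFn, List.getElem_set, Function.update_apply, Fin.ext_iff]
    simp [eq_comm]

lemma prod_ofFn_update {N : ℕ} (f : Fin N → R) (m : Fin N) (y : R) :
    (List.ofFn (update f m y)).prod
      = ((List.ofFn f).take m).prod * y * ((List.ofFn f).drop ((m : ℕ) + 1)).prod := by
  rw [ofFn_update', List.prod_set]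
  simp [m.isLt]

lemma prod_update_sub {N : ℕ} (f : Fin N → R) (m : Fin N) (y z : R) :
    (List.ofFn (update f m (y - z))).prod
      = (List.ofFn (update f m y)).prod - (List.ofFn (update f m z)).prod := by
  simp only [prod_ofFn_update, mul_sub, sub_mul]

lemma prod_update_zero {N : ℕ} (f : Fin N → R) (m : Fin N) :
    (List.ofFn (update f m (0 : R))).prod = 0 := by
  simp [prod_ofFn_update]

lemma prod_update_ite {N : ℕ} (f : Fin N → R) (m : Fin N) (c : Prop) [Decidable c] (y : R) :
    (List.ofFn (update f m (if c then y else 0))).prod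
      = if c then (List.ofFn (update f m y)).prod else 0 := by
  split <;> simp [prod_update_zero]

lemma comm_ofFn_prod (x : R) : ∀ {N : ℕ} (f : Fin N → R),
    x * (List.ofFn f).prod - (List.ofFn f).prod * x
      = ∑ m : Fin N, (List.ofFn (update f m (x * f m - f m * x))).prod
  | 0, f => by simp
  | N + 1, f => by
    have IH := comm_ofFn_prod x (fun i : Fin N => f i.succ)
    have h0 : List.ofFn (update f 0 (x * f 0 - f 0 * x))
        = (x * f 0 - f 0 * x) :: List.ofFn fun i : Fin N => f i.succ := by
      rw [List.ofFn_succ, Function.update_self]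
      exact congrArg (_ :: List.ofFn ·)
        (funext fun i => Function.update_of_ne (Fin.succ_ne_zero i) _ _)
    have hs : ∀ (m : Fin N) (c : R), List.ofFn (update f m.succ c)
        = f 0 :: List.ofFn (update (fun i : Fin N => f i.succ) m c) := by
      intro m c
      rw [List.ofFn_succ, Function.update_of_ne (Fin.succ_ne_zero m).symm]
      exact congrArg (_ :: List.ofFn ·)
        (Function.update_comp_eq_of_injective' f (Fin.succ_injective N) m c)
    rw [List.ofFn_succ, List.prod_cons, Fin.sum_univ_succ, h0, List.prod_cons]
    simp only [hs, List.prod_cons]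
    rw [← Finset.mul_sum, ← IH]
    noncomm_ring


end Aux

namespace QM

local notation "U" => UniversalEnvelopingAlgebra K (Matrix (Fin n) (Fin n) K)
local notation "ιU" => UniversalEnvelopingAlgebra.ι K (L := Matrix (Fin n) (Fin n) K)

/-- the `m`-th factor of the `σ`-summand of the quantum minor. -/
noncomputable def fac (I J : Fin (k + 1) → Fin n) (σ : Equiv.Perm (Fin (k + 1)))
    (m : Fin (k + 1)) : U :=
  ιU (Matrix.single (I m) (J (σ m)) (1 : K))
    + (if I m = J (σ m) then (((m : ℕ) : K)) • (1 : U) else 0)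

lemma qMinor_eq (I J : Fin (k + 1) → Fin n) :
    qMinor K n k I J
      = ∑ σ : Equiv.Perm (Fin (k + 1)),
          (Equiv.Perm.sign σ : ℤ) • (List.ofFn (fac K n k I J σ)).prod := rfl

lemma iota_comm (A B : Matrix (Fin n) (Fin n) K) :
    ιU A * ιU B - ιU B * ιU A = ιU (A * B - B * A) := by
  have := (UniversalEnvelopingAlgebra.ι K (L := Matrix (Fin n) (Fin n) K)).map_lie A B
  rw [Ring.lie_def, Ring.lie_def] at this
  exact this.symm

lemma stdMul (a b c d : Fin n) :
    Matrix.single a b (1 : K) * Matrix.single c d (1 : K)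
      = if b = c then Matrix.single a d (1 : K) else 0 := by
  by_cases h : b = c
  · subst h
    simp [Matrix.single_mul_single_same]
  · simp [h, Matrix.single_mul_single_of_ne]

lemma fac_comm (a b : Fin n) (I J : Fin (k + 1) → Fin n) (σ : Equiv.Perm (Fin (k + 1)))
    (m : Fin (k + 1)) :
    ιU (Matrix.single a b (1 : K)) * fac K n k I J σ m
        - fac K n k I J σ m * ιU (Matrix.single a b (1 : K))
      = (if I m = b then fac K n k (update I m a) J σ m else 0)
        - (if J (σ m) = a then fac K n k I (update J (σ m) b) σ m else 0) := by
  set x := ιU (Matrix.single a b (1 : K)) with hx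
  have hscal : x * (fac K n k I J σ m)
      - (fac K n k I J σ m) * x
      = x * ιU (Matrix.single (I m) (J (σ m)) (1 : K))
        - ιU (Matrix.single (I m) (J (σ m)) (1 : K)) * x := by
    unfold fac
    split <;> noncomm_ring
  rw [hscal, hx, iota_comm, stdMul, stdMul]
  unfold fac
  simp only [Function.update_self]
  rcases eq_or_ne (I m) b with h1 | h1 <;> rcases eq_or_ne (J (σ m)) a with h2 | h2
  · simp [h1, h2, map_sub]
  · simp [h1, h2, h2.symm, map_sub]
  · simp [h1, h2, h1.symm, map_sub]
  · simp [h1, h2, h1.symm, h2.symm, map_sub]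

lemma update_fac_I (a : Fin n) (I J : Fin (k + 1) → Fin n) (σ : Equiv.Perm (Fin (k + 1)))
    (m : Fin (k + 1)) :
    Function.update (fac K n k I J σ) m (fac K n k (update I m a) J σ m)
      = fac K n k (update I m a) J σ := by
  funext i
  rcases eq_or_ne i m with h | h
  · subst h; simp
  · rw [Function.update_of_ne h]
    unfold fac
    rw [Function.update_of_ne h]

lemma update_fac_J (b : Fin n) (I J : Fin (k + 1) → Fin n) (σ : Equiv.Perm (Fin (k + 1)))
    (m : Fin (k + 1)) :
    Function.update (fac K n k I J σ) m (fac K n k I (update J (σ m) b) σ m)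
      = fac K n k I (update J (σ m) b) σ := by
  funext i
  rcases eq_or_ne i m with h | h
  · subst h; simp
  · rw [Function.update_of_ne h]
    unfold fac
    rw [Function.update_of_ne (fun hc => h (σ.injective hc))]

lemma comm_P (a b : Fin n) (I J : Fin (k + 1) → Fin n) (σ : Equiv.Perm (Fin (k + 1))) :
    UniversalEnvelopingAlgebra.ι K (Matrix.single a b (1 : K))
          * (List.ofFn (fac K n k I J σ)).prod
        - (List.ofFn (fac K n k I J σ)).prod
          * UniversalEnvelopingAlgebra.ι K (Matrix.single a b (1 : K))
      = ∑ m : Fin (k + 1),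
          ((if I m = b then (List.ofFn (fac K n k (update I m a) J σ)).prod else 0)
            - (if J (σ m) = a then
                (List.ofFn (fac K n k I (update J (σ m) b) σ)).prod else 0)) := by
  rw [comm_ofFn_prod]
  refine Finset.sum_congr rfl fun m _ => ?_
  rw [fac_comm, prod_update_sub, prod_update_ite, prod_update_ite,
    update_fac_I, update_fac_J]

lemma sum_ite_pull {α : Type*} [Fintype α] (c : Prop) [Decidable c]
    (g : α → UniversalEnvelopingAlgebra K (Matrix (Fin n) (Fin n) K)) :
    (∑ σ : α, if c then g σ else 0) = if c then ∑ σ : α, g σ else 0 := by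
  split <;> simp

lemma bracket_qMinor (a b : Fin n) (I J : Fin (k + 1) → Fin n) :
    ιU (Matrix.single a b (1 : K)) * qMinor K n k I J
        - qMinor K n k I J * ιU (Matrix.single a b (1 : K))
      = (∑ m : Fin (k + 1), if I m = b then qMinor K n k (update I m a) J else 0)
        - ∑ l : Fin (k + 1), if J l = a then qMinor K n k I (update J l b) else 0 := by
  set x := ιU (Matrix.single a b (1 : K)) with hx
  have key : ∀ σ : Equiv.Perm (Fin (k + 1)),
      (Equiv.Perm.sign σ : ℤ) • (x * (List.ofFn (fac K n k I J σ)).prod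
          - (List.ofFn (fac K n k I J σ)).prod * x)
        = (∑ m : Fin (k + 1), if I m = b then
              (Equiv.Perm.sign σ : ℤ) • (List.ofFn (fac K n k (update I m a) J σ)).prod else 0)
          - ∑ l : Fin (k + 1), if J l = a then
              (Equiv.Perm.sign σ : ℤ) • (List.ofFn (fac K n k I (update J l b) σ)).prod else 0 := by
    intro σ
    rw [hx, comm_P, Finset.smul_sum]
    simp only [smul_sub, smul_ite, smul_zero]
    rw [Finset.sum_sub_distrib]
    congr 1
    exact Equiv.sum_comp σ (fun l => if J l = a then
      (Equiv.Perm.sign σ : ℤ) • (List.ofFn (fac K n k I (update J l b) σ)).prod else 0)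
  calc x * qMinor K n k I J - qMinor K n k I J * x
      = ∑ σ : Equiv.Perm (Fin (k + 1)),
          (Equiv.Perm.sign σ : ℤ) • (x * (List.ofFn (fac K n k I J σ)).prod
            - (List.ofFn (fac K n k I J σ)).prod * x) := by
        rw [qMinor_eq, Finset.mul_sum, Finset.sum_mul, ← Finset.sum_sub_distrib]
        exact Finset.sum_congr rfl fun σ _ => by
          rw [mul_smul_comm, smul_mul_assoc, smul_sub]
    _ = (∑ σ : Equiv.Perm (Fin (k + 1)), ∑ m : Fin (k + 1), if I m = b then
            (Equiv.Perm.sign σ : ℤ) • (List.ofFn (fac K n k (update I m a) J σ)).prod else 0)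
        - ∑ σ : Equiv.Perm (Fin (k + 1)), ∑ l : Fin (k + 1), if J l = a then
            (Equiv.Perm.sign σ : ℤ) • (List.ofFn (fac K n k I (update J l b) σ)).prod else 0 := by
        simp only [key]
        rw [Finset.sum_sub_distrib]
    _ = _ := by
        rw [Finset.sum_comm, Finset.sum_comm (γ := Equiv.Perm (Fin (k + 1)))]
        congr 1
        · exact Finset.sum_congr rfl fun m _ => by rw [sum_ite_pull, qMinor_eq]
        · exact Finset.sum_congr rfl fun l _ => by rw [sum_ite_pull, qMinor_eq]

end QM

/-- The `K`-span of the quantum minors of order `k+1` in `U(gl_n)` is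
invariant under the adjoint action of `gl_n`. -/
theorem qMinor_span_ad_invariant [CharZero K] (hn : 0 < n) (hk : 0 < k)
    (A : Matrix (Fin n) (Fin n) K)
    (v : UniversalEnvelopingAlgebra K (Matrix (Fin n) (Fin n) K))
    (hv : v ∈ Submodule.span K
      {u | ∃ I J : Fin (k + 1) → Fin n, u = qMinor K n k I J}) :
    ⁅UniversalEnvelopingAlgebra.ι K A, v⁆ ∈ Submodule.span K
      {u | ∃ I J : Fin (k + 1) → Fin n, u = qMinor K n k I J} := by
  induction hv using Submodule.span_induction with
  | mem u hu =>
    obtain ⟨I, J, rfl⟩ := hu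
    have hA : UniversalEnvelopingAlgebra.ι K A
        = ∑ i : Fin n, ∑ j : Fin n,
            A i j • UniversalEnvelopingAlgebra.ι K (Matrix.single i j (1 : K)) := by
      rw [← LieHom.coe_toLinearMap]
      conv_lhs => rw [Matrix.matrix_eq_sum_single A]
      rw [map_sum]
      refine Finset.sum_congr rfl fun i _ => ?_
      rw [map_sum]
      refine Finset.sum_congr rfl fun j _ => ?_
      rw [show Matrix.single i j (A i j) = A i j • Matrix.single i j (1 : K) by
        rw [Matrix.smul_single, smul_eq_mul, mul_one], map_smul]
    rw [Ring.lie_def, hA, Finset.sum_mul, Finset.mul_sum, ← Finset.sum_sub_distrib]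
    apply Submodule.sum_mem
    intro i _
    rw [Finset.sum_mul, Finset.mul_sum, ← Finset.sum_sub_distrib]
    apply Submodule.sum_mem
    intro j _
    rw [smul_mul_assoc, mul_smul_comm, ← smul_sub, QM.bracket_qMinor]
    apply Submodule.smul_mem
    apply Submodule.sub_mem <;>
      refine Submodule.sum_mem _ fun m _ => ?_ <;>
      split <;>
      first
        | exact Submodule.subset_span ⟨_, _, rfl⟩
        | exact Submodule.zero_mem _
  | zero => simp
  | add y z hy hz ihy ihz => rw [lie_add]; exact Submodule.add_mem _ ihy ihz
  | smul t y hy ih =>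
    simp only [Ring.lie_def] at ih ⊢
    rw [mul_smul_comm, smul_mul_assoc, ← smul_sub]
    exact Submodule.smul_mem _ _ ih
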